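/- Define K₁(t) = ∫₀^∞ exp(−t·cosh u)·cosh u du for t > 0. Then for every t > 0: e^{−t}/t ≤ K₁(t) ≤ √(π/(2t))·e^{−t} + e^{−t}/t. -/

import Mathlib

open MeasureTheory

/-- MacDonald's function of order 1, `K₁(t) = ∫₀^∞ exp(−t·cosh u)·cosh u du`. -/
noncomputable def K1 (t : ℝ) : ℝ :=
  ∫ u in Set.Ioi (0 : ℝ), Real.exp (-t * Real.cosh u) * Real.cosh u

lemma cosh_ge_one_add_half_sq {u : ℝ} (hu : 0 ≤ u) : 1 + u ^ 2 / 2 ≤ Real.cosh u := by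
  have h1 : u / 2 ≤ Real.sinh (u / 2) := Real.self_le_sinh_iff.mpr (by linarith)
  have h2 : Real.cosh u = 2 * Real.sinh (u / 2) ^ 2 + 1 := by
    have h3 : Real.cosh (2 * (u / 2))
        = Real.cosh (u / 2) ^ 2 + Real.sinh (u / 2) ^ 2 := Real.cosh_two_mul _
    have h4 : Real.cosh (u / 2) ^ 2 = Real.sinh (u / 2) ^ 2 + 1 := Real.cosh_sq _
    have : (2 : ℝ) * (u / 2) = u := by ring
    rw [this] at h3
    linarith
  nlinarith [h1, hu]

lemma decay_bound {t : ℝ} (ht : 0 < t) {u : ℝ} (hu : 0 ≤ u) :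
    Real.exp (-t * Real.cosh u) * Real.cosh u ≤ Real.exp (8 / t) * Real.exp (-u) := by
  have hcle : Real.cosh u ≤ Real.exp u := by
    rw [Real.cosh_eq]
    have h1 : Real.exp (-u) ≤ Real.exp u := Real.exp_le_exp.mpr (by linarith)
    linarith [Real.exp_pos u]
  have hge := cosh_ge_one_add_half_sq hu
  have key : u - t * Real.cosh u ≤ 8 / t - u := by
    have hnum : 0 ≤ 8 + t ^ 2 + t ^ 2 * u ^ 2 / 2 - 2 * u * t := by
      nlinarith [sq_nonneg (t * u - 2)]
    have hdiv : 0 ≤ (8 + t ^ 2 + t ^ 2 * u ^ 2 / 2 - 2 * u * t) / t :=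
      div_nonneg hnum ht.le
    have heq : (8 + t ^ 2 + t ^ 2 * u ^ 2 / 2 - 2 * u * t) / t
        = 8 / t + t + t * u ^ 2 / 2 - 2 * u := by
      field_simp
    rw [heq] at hdiv
    have : t * (1 + u ^ 2 / 2) ≤ t * Real.cosh u := by
      exact mul_le_mul_of_nonneg_left hge ht.le
    nlinarith
  calc Real.exp (-t * Real.cosh u) * Real.cosh u
      ≤ Real.exp (-t * Real.cosh u) * Real.exp u :=
        mul_le_mul_of_nonneg_left hcle (Real.exp_pos _).le
    _ = Real.exp (u - t * Real.cosh u) := by rw [← Real.exp_add]; ring_nf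
    _ ≤ Real.exp (8 / t - u) := Real.exp_le_exp.mpr key
    _ = Real.exp (8 / t) * Real.exp (-u) := by rw [← Real.exp_add]; ring_nf

lemma integrable_main {t : ℝ} (ht : 0 < t) :
    IntegrableOn (fun u => Real.exp (-t * Real.cosh u) * Real.cosh u) (Set.Ioi (0 : ℝ)) := by
  have hmaj : IntegrableOn (fun u : ℝ => Real.exp (8 / t) * Real.exp (-(1 : ℝ) * u))
      (Set.Ioi (0 : ℝ)) := (exp_neg_integrableOn_Ioi 0 one_pos).const_mul _
  apply Integrable.mono hmaj
  · exact (Continuous.aestronglyMeasurable (by continuity)).restrict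
  · filter_upwards [ae_restrict_mem measurableSet_Ioi] with u hu
    have hu0 : (0 : ℝ) ≤ u := le_of_lt hu
    rw [Real.norm_eq_abs, Real.norm_eq_abs, abs_of_nonneg (by positivity),
      abs_of_nonneg (by positivity)]
    have := decay_bound ht hu0
    simpa using this

lemma integrable_sinh {t : ℝ} (ht : 0 < t) :
    IntegrableOn (fun u => Real.exp (-t * Real.cosh u) * Real.sinh u) (Set.Ioi (0 : ℝ)) := by
  apply Integrable.mono (integrable_main ht)
  · exact (Continuous.aestronglyMeasurable (by continuity)).restrict
  · filter_upwards [ae_restrict_mem measurableSet_Ioi] with u hu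
    have hu0 : (0 : ℝ) ≤ u := le_of_lt hu
    have hs : 0 ≤ Real.sinh u := Real.sinh_nonneg_iff.mpr hu0
    rw [Real.norm_eq_abs, Real.norm_eq_abs, abs_of_nonneg (by positivity),
      abs_of_nonneg (by positivity)]
    exact mul_le_mul_of_nonneg_left (Real.sinh_lt_cosh u).le (Real.exp_pos _).le

lemma integrable_expneg {t : ℝ} (ht : 0 < t) :
    IntegrableOn (fun u => Real.exp (-t * Real.cosh u) * Real.exp (-u)) (Set.Ioi (0 : ℝ)) := by
  apply Integrable.mono (integrable_main ht)
  · exact (Continuous.aestronglyMeasurable (by continuity)).restrict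
  · filter_upwards [ae_restrict_mem measurableSet_Ioi] with u hu
    have hu0 : (0 : ℝ) ≤ u := le_of_lt hu
    have hec : Real.exp (-u) ≤ Real.cosh u := by
      rw [Real.cosh_eq]
      have : Real.exp (-u) ≤ Real.exp u := Real.exp_le_exp.mpr (by linarith)
      linarith
    rw [Real.norm_eq_abs, Real.norm_eq_abs, abs_of_nonneg (by positivity),
      abs_of_nonneg (by positivity)]
    exact mul_le_mul_of_nonneg_left hec (Real.exp_pos _).le

lemma integral_sinh_part {t : ℝ} (ht : 0 < t) :
    ∫ u in Set.Ioi (0 : ℝ), Real.exp (-t * Real.cosh u) * Real.sinh u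
      = Real.exp (-t) / t := by
  have hderiv : ∀ u ∈ Set.Ici (0 : ℝ),
      HasDerivAt (fun u => -Real.exp (-t * Real.cosh u) / t)
        (Real.exp (-t * Real.cosh u) * Real.sinh u) u := by
    intro u _
    have h1 : HasDerivAt (fun u : ℝ => -t * Real.cosh u) (-t * Real.sinh u) u :=
      (Real.hasDerivAt_cosh u).const_mul (-t)
    have h2 := (h1.exp.neg).div_const t
    refine h2.congr_deriv ?_
    rw [div_eq_iff ht.ne']
    ring
  have htend : Filter.Tendsto (fun u => -Real.exp (-t * Real.cosh u) / t)
      Filter.atTop (nhds 0) := by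
    have h1 : Filter.Tendsto (fun u : ℝ => -t * Real.cosh u) Filter.atTop Filter.atBot := by
      have hcosh : Filter.Tendsto Real.cosh Filter.atTop Filter.atTop := by
        apply Filter.tendsto_atTop_mono (fun u => ?_)
          (Real.tendsto_exp_atTop.atTop_div_const (by norm_num : (0:ℝ) < 2))
        rw [Real.cosh_eq]
        have := (Real.exp_pos (-u)).le
        linarith
      have := Filter.Tendsto.const_mul_atTop ht hcosh
      simpa [Function.comp_def, neg_mul] using (Filter.tendsto_neg_atTop_atBot.comp this)
    have h2 := (Real.tendsto_exp_atBot.comp h1).neg.div_const t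
    simpa using h2
  have := integral_Ioi_of_hasDerivAt_of_tendsto' hderiv (integrable_sinh ht) htend
  rw [this]
  simp [Real.cosh_zero]
  ring

lemma integral_expneg_le {t : ℝ} (ht : 0 < t) :
    ∫ u in Set.Ioi (0 : ℝ), Real.exp (-t * Real.cosh u) * Real.exp (-u)
      ≤ Real.sqrt (Real.pi / (2 * t)) * Real.exp (-t) := by
  have ht2 : (0 : ℝ) < t / 2 := by linarith
  have hbound : ∀ u ∈ Set.Ioi (0 : ℝ),
      Real.exp (-t * Real.cosh u) * Real.exp (-u)
        ≤ Real.exp (-t) * Real.exp (-(t / 2) * u ^ 2) := by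
    intro u hu
    have hu0 : (0 : ℝ) ≤ u := le_of_lt hu
    have h1 : Real.exp (-t * Real.cosh u) ≤ Real.exp (-t) * Real.exp (-(t / 2) * u ^ 2) := by
      rw [← Real.exp_add]
      apply Real.exp_le_exp.mpr
      have := cosh_ge_one_add_half_sq hu0
      nlinarith
    have h2 : Real.exp (-u) ≤ 1 := Real.exp_le_one_iff.mpr (by linarith)
    calc Real.exp (-t * Real.cosh u) * Real.exp (-u)
        ≤ Real.exp (-t * Real.cosh u) * 1 :=
          mul_le_mul_of_nonneg_left h2 (Real.exp_pos _).le
      _ = Real.exp (-t * Real.cosh u) := mul_one _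
      _ ≤ Real.exp (-t) * Real.exp (-(t / 2) * u ^ 2) := h1
  have hgint : IntegrableOn (fun u : ℝ => Real.exp (-t) * Real.exp (-(t / 2) * u ^ 2))
      (Set.Ioi (0 : ℝ)) :=
    ((integrable_exp_neg_mul_sq ht2).const_mul _).integrableOn
  have hmono := setIntegral_mono_on (integrable_expneg ht) hgint measurableSet_Ioi hbound
  refine hmono.trans ?_
  rw [integral_const_mul, integral_gaussian_Ioi]
  have heq : Real.pi / (t / 2) = 2 ^ 2 * (Real.pi / (2 * t)) := by
    field_simp
  rw [heq, Real.sqrt_mul (by norm_num), Real.sqrt_sq (by norm_num)]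
  ring_nf
  rfl

/-- For every `t > 0`: `e^{−t}/t ≤ K₁(t) ≤ √(π/(2t))·e^{−t} + e^{−t}/t`. -/
theorem K1_bounds (t : ℝ) (ht : 0 < t) :
    Real.exp (-t) / t ≤ K1 t ∧
    K1 t ≤ Real.sqrt (Real.pi / (2 * t)) * Real.exp (-t) + Real.exp (-t) / t := by
  have hsplit : K1 t = (∫ u in Set.Ioi (0 : ℝ), Real.exp (-t * Real.cosh u) * Real.sinh u)
      + ∫ u in Set.Ioi (0 : ℝ), Real.exp (-t * Real.cosh u) * Real.exp (-u) := by
    rw [K1, ← integral_add (integrable_sinh ht) (integrable_expneg ht)]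
    apply setIntegral_congr_fun measurableSet_Ioi
    intro u _
    have : Real.cosh u = Real.sinh u + Real.exp (-u) := by
      rw [Real.cosh_eq, Real.sinh_eq]; ring
    simp only []
    rw [this]
    ring
  have hnn : 0 ≤ ∫ u in Set.Ioi (0 : ℝ), Real.exp (-t * Real.cosh u) * Real.exp (-u) :=
    setIntegral_nonneg measurableSet_Ioi (fun u _ => by positivity)
  have hle := integral_expneg_le ht
  rw [hsplit, integral_sinh_part ht]
  constructor <;> linarith
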